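/- Let H be a nontrivial complex Hilbert space with inner product ⟨·,·⟩ linear in the first and conjugate-linear in the second argument. Let A : H → H be a bounded linear operator whose spectrum satisfies spec(A) = {λ*} ∪ S, where Re λ* = 0 and S ⊆ {z ∈ ℂ : Re z < 0}. Let B : H → H be a bounded self-adjoint operator and c > 0 with ⟨B g, g⟩ ≥ c·‖g‖² for all g ∈ H, and let σ > 0. Suppose that for each p < 0 there is a bounded self-adjoint linear operator V_p : H → H with ⟨V_p g, g⟩ ≥ 0 for all g ∈ H, satisfying the Lyapunov equation for (p·Id + A, B, σ). Then there exists a sequence (u_k)_{k ∈ ℕ} in H with ‖u_k‖ = 1 for all k such that for each k, ⟨V_p u_k, u_k⟩ → +∞ as p → 0⁻. -/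

import Mathlib

open ContinuousLinearMap Filter Topology

/-- The paper's inner product `⟨x, y⟩` (linear in the first argument,
conjugate-linear in the second) equals Mathlib's `inner y x`. -/
local notation "⟪" x ", " y "⟫" => @inner ℂ _ _ x y

/-- `V` satisfies the Lyapunov equation for `(A, C, σ)`. -/
def LyapunovEq {H : Type*} [NormedAddCommGroup H] [InnerProductSpace ℂ H]
    [CompleteSpace H] (A C : H →L[ℂ] H) (σ : ℝ) (V : H →L[ℂ] H) : Prop :=
  ∀ g h : H, ⟪h, A (V g)⟫ + ⟪h, V (adjoint A g)⟫ = -(σ ^ 2 : ℂ) * ⟪h, C g⟫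

open NormedSpace

section Aux
variable {H : Type*} [NormedAddCommGroup H] [InnerProductSpace ℂ H] [CompleteSpace H]

noncomputable def sgrp (T : H →L[ℂ] H) (t : ℝ) : H →L[ℂ] H := exp (t • T)

lemma sgrp_zero (T : H →L[ℂ] H) (x : H) : sgrp T 0 x = x := by
  simp [sgrp, exp_zero]

lemma sgrp_hasDerivAt (T : H →L[ℂ] H) (x : H) (t : ℝ) :
    HasDerivAt (fun s => sgrp T s x) (T (sgrp T t x)) t := by
  have h1 : HasDerivAt (fun s : ℝ => exp (s • T)) (exp (t • T) * T) t :=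
    hasDerivAt_exp_smul_const T t
  have h2 : HasDerivAt (fun s : ℝ => (sgrp T s).restrictScalars ℝ)
      ((exp (t • T) * T).restrictScalars ℝ) t :=
    (ContinuousLinearMap.restrictScalarsIsometry ℂ H H ℝ ℝ).toContinuousLinearMap.hasFDerivAt.comp_hasDerivAt t h1
  have h3 := h2.clm_apply (hasDerivAt_const t x)
  simp only [map_zero, add_zero, ContinuousLinearMap.coe_restrictScalars'] at h3
  have hcomm : (exp (t • T) * T) x = T (sgrp T t x) := by
    have h := ((Commute.refl T).smul_right t).exp_right
    calc (exp (t • T) * T) x = (T * exp (t • T)) x := by rw [← h.eq]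
    _ = T (sgrp T t x) := rfl
  rw [hcomm] at h3
  convert h3 using 2


lemma sa_comm {W : H →L[ℂ] H} (hW : IsSelfAdjoint W) (x y : H) : ⟪W x, y⟫ = ⟪x, W y⟫ := by
  nth_rewrite 1 [← hW.adjoint_eq]; exact ContinuousLinearMap.adjoint_inner_left W y x

lemma form_hasDerivAt {W T : H →L[ℂ] H} (hW : IsSelfAdjoint W) {g : ℝ → H}
    (hg : ∀ s, HasDerivAt g (T (g s)) s) (t : ℝ) :
    HasDerivAt (fun s => (⟪g s, W (g s)⟫ : ℂ).re) (2 * (⟪g t, W (T (g t))⟫ : ℂ).re) t := by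
  have hWg : HasDerivAt (fun s => W (g s)) (W (T (g t))) t :=
    ((W.restrictScalars ℝ).hasFDerivAt.comp_hasDerivAt t (hg t))
  have hin : HasDerivAt (fun s => (⟪g s, W (g s)⟫ : ℂ))
      (⟪g t, W (T (g t))⟫ + ⟪T (g t), W (g t)⟫) t :=
    (hg t).inner ℂ hWg
  have hre : HasDerivAt (fun s => (⟪g s, W (g s)⟫ : ℂ).re)
      (Complex.reCLM (⟪g t, W (T (g t))⟫ + ⟪T (g t), W (g t)⟫)) t :=
    (Complex.reCLM.hasFDerivAt.comp_hasDerivAt t hin)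
  convert hre using 1
  have h2 : ⟪T (g t), W (g t)⟫ = (starRingEnd ℂ) ⟪g t, W (T (g t))⟫ := by
    rw [← inner_conj_symm, sa_comm hW]
  simp only [Complex.reCLM_apply, Function.comp_def, h2, Complex.add_re, Complex.conj_re]
  ring

lemma lyap_re {L C W : H →L[ℂ] H} {σ : ℝ} (hW : IsSelfAdjoint W)
    (h : LyapunovEq L C σ W) (w : H) :
    2 * (⟪w, W (ContinuousLinearMap.adjoint L w)⟫ : ℂ).re = -(σ ^ 2) * (⟪w, C w⟫ : ℂ).re := by
  have h1 := h w w
  have h2 : ⟪w, L (W w)⟫ = (starRingEnd ℂ) ⟪w, W (ContinuousLinearMap.adjoint L w)⟫ := by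
    rw [← ContinuousLinearMap.adjoint_inner_left L (W w) w, ← inner_conj_symm, sa_comm hW]
  rw [h2] at h1
  have h3 := congrArg Complex.re h1
  simp only [Complex.add_re, Complex.conj_re, Complex.mul_re, Complex.neg_re, Complex.neg_im,
    ← Complex.ofReal_pow, Complex.ofReal_re, Complex.ofReal_im, neg_zero, zero_mul, sub_zero,
    neg_mul] at h3
  linarith

lemma adjoint_shift (A : H →L[ℂ] H) (p : ℝ) :
    ContinuousLinearMap.adjoint ((p : ℂ) • ContinuousLinearMap.id ℂ H + A)
      = (p : ℂ) • ContinuousLinearMap.id ℂ H + ContinuousLinearMap.adjoint A := by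
  have hid : (ContinuousLinearMap.id ℂ H) = (1 : H →L[ℂ] H) := rfl
  rw [← ContinuousLinearMap.star_eq_adjoint, ← ContinuousLinearMap.star_eq_adjoint, hid,
    star_add, star_smul, star_one, Complex.star_def, Complex.conj_ofReal]

lemma adjoint_smul_id (p : ℝ) :
    ContinuousLinearMap.adjoint ((p : ℂ) • ContinuousLinearMap.id ℂ H)
      = (p : ℂ) • ContinuousLinearMap.id ℂ H := by
  have hid : (ContinuousLinearMap.id ℂ H) = (1 : H →L[ℂ] H) := rfl
  rw [← ContinuousLinearMap.star_eq_adjoint, hid, star_smul, star_one, Complex.star_def,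
    Complex.conj_ofReal]

lemma lyap_diff {A B : H →L[ℂ] H} {σ p q : ℝ} {Vp Vq : H →L[ℂ] H}
    (hp : LyapunovEq ((p : ℂ) • ContinuousLinearMap.id ℂ H + A) B σ Vp)
    (hq : LyapunovEq ((q : ℂ) • ContinuousLinearMap.id ℂ H + A) B σ Vq) (hpq : p ≤ q) :
    LyapunovEq ((p : ℂ) • ContinuousLinearMap.id ℂ H + A) Vq (Real.sqrt (2 * (q - p)))
      (Vq - Vp) := by
  intro g h
  have hq' := hq g h
  have hp' := hp g h
  have hsq : ((Real.sqrt (2 * (q - p)) : ℝ) : ℂ) ^ 2 = ((2 * (q - p) : ℝ) : ℂ) := by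
    rw [← Complex.ofReal_pow, Real.sq_sqrt (by linarith)]
  simp only [adjoint_shift, adjoint_smul_id, ContinuousLinearMap.add_apply, ContinuousLinearMap.smul_apply,
    ContinuousLinearMap.id_apply, ContinuousLinearMap.sub_apply, map_add, map_smul, map_sub,
    inner_add_right, inner_smul_right, inner_sub_right, hsq] at hq' hp' ⊢
  push_cast at hq' hp' ⊢
  linear_combination hq' - hp'

lemma lyap_mono {A B : H →L[ℂ] H} {σ c : ℝ} (hσ : 0 < σ) (hc : 0 < c)
    (hB : ∀ g : H, c * ‖g‖ ^ 2 ≤ (⟪g, B g⟫ : ℂ).re)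
    {p q : ℝ} (hpq : p ≤ q)
    {Vp Vq : H →L[ℂ] H} (hpsa : IsSelfAdjoint Vp) (hqsa : IsSelfAdjoint Vq)
    (hppos : ∀ g : H, 0 ≤ (⟪g, Vp g⟫ : ℂ).re) (hqpos : ∀ g : H, 0 ≤ (⟪g, Vq g⟫ : ℂ).re)
    (hlp : LyapunovEq ((p : ℂ) • ContinuousLinearMap.id ℂ H + A) B σ Vp)
    (hlq : LyapunovEq ((q : ℂ) • ContinuousLinearMap.id ℂ H + A) B σ Vq)
    (x : H) : (⟪x, Vp x⟫ : ℂ).re ≤ (⟪x, Vq x⟫ : ℂ).re := by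
  set T := ContinuousLinearMap.adjoint ((p : ℂ) • ContinuousLinearMap.id ℂ H + A) with hT
  set g : ℝ → H := fun t => sgrp T t x with hgdef
  have hg : ∀ s, HasDerivAt g (T (g s)) s := fun s => sgrp_hasDerivAt T x s
  set φ : ℝ → ℝ := fun s => (⟪g s, Vp (g s)⟫ : ℂ).re with hφdef
  have hφ : ∀ t, HasDerivAt φ (-(σ ^ 2) * (⟪g t, B (g t)⟫ : ℂ).re) t := by
    intro t
    have h1 := form_hasDerivAt hpsa hg t
    rwa [hT, lyap_re hpsa hlp (g t)] at h1
  set W : H →L[ℂ] H := Vq - Vp with hW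
  have hWsa : IsSelfAdjoint W := hqsa.sub hpsa
  set f : ℝ → ℝ := fun s => (⟪g s, W (g s)⟫ : ℂ).re with hfdef
  have hf : ∀ t, HasDerivAt f (-(2 * (q - p)) * (⟪g t, Vq (g t)⟫ : ℂ).re) t := by
    intro t
    have h1 := form_hasDerivAt hWsa hg t
    have h2 := lyap_re hWsa (lyap_diff hlp hlq hpq) (g t)
    rw [Real.sq_sqrt (by linarith)] at h2
    rwa [hT, h2] at h1
  -- f is antitone
  have hfmono : Antitone f := by
    apply antitone_of_deriv_nonpos
    · exact fun t => (hf t).differentiableAt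
    · intro t
      rw [(hf t).deriv]
      have := hqpos (g t)
      nlinarith
  -- the key smallness claim
  have claim : ∀ ε > (0 : ℝ), ∃ t : ℝ, 0 ≤ t ∧ ‖g t‖ ^ 2 ≤ ε := by
    intro ε hε
    by_contra hcon
    push_neg at hcon
    have step : ∀ n : ℕ, φ (n + 1) ≤ φ n - σ ^ 2 * c * ε := by
      intro n
      obtain ⟨ξ, hξ, heq⟩ := exists_hasDerivAt_eq_slope φ
        (fun t => -(σ ^ 2) * (⟪g t, B (g t)⟫ : ℂ).re) (show (n : ℝ) < n + 1 by linarith)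
        (Differentiable.continuous (fun t => (hφ t).differentiableAt)).continuousOn
        (fun t _ => hφ t)
      have hξ0 : (0 : ℝ) ≤ ξ := le_trans (Nat.cast_nonneg n) (le_of_lt hξ.1)
      have h1 : ε < ‖g ξ‖ ^ 2 := hcon ξ hξ0
      have h2 : c * ‖g ξ‖ ^ 2 ≤ (⟪g ξ, B (g ξ)⟫ : ℂ).re := hB (g ξ)
      have h3 : (φ (n + 1) - φ n) / ((n + 1 : ℝ) - n) = φ (n+1) - φ n := by
        simp
      rw [h3] at heq
      have hσ2 : 0 < σ ^ 2 := by positivity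
      have h7 : c * ε ≤ (⟪g ξ, B (g ξ)⟫ : ℂ).re := by nlinarith
      have h8 : σ ^ 2 * (c * ε) ≤ σ ^ 2 * (⟪g ξ, B (g ξ)⟫ : ℂ).re :=
        mul_le_mul_of_nonneg_left h7 (le_of_lt hσ2)
      nlinarith [h8, heq]
    have bound : ∀ n : ℕ, φ n ≤ φ 0 - n * (σ ^ 2 * c * ε) := by
      intro n
      induction n with
      | zero => simp
      | succ n ih =>
        have := step n
        push_cast
        push_cast at ih
        linarith
    obtain ⟨n, hn⟩ := exists_nat_gt (φ 0 / (σ ^ 2 * c * ε))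
    have hpos : 0 < σ ^ 2 * c * ε := by positivity
    have h4 : φ 0 < n * (σ ^ 2 * c * ε) := by
      rw [div_lt_iff₀ hpos] at hn; linarith
    have h5 := bound n
    have h6 : 0 ≤ φ (n : ℕ) := hppos _
    linarith
  -- conclude
  have key : ∀ ε > (0 : ℝ), (⟪x, Vp x⟫ : ℂ).re ≤ (⟪x, Vq x⟫ : ℂ).re + ε := by
    intro ε hε
    set K := ‖W‖ + 1 with hK
    have hK0 : 0 < K := by positivity
    obtain ⟨t, ht0, ht⟩ := claim (ε / K) (by positivity)
    have hft : -ε ≤ f t := by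
      have h1 : |(⟪g t, W (g t)⟫ : ℂ).re| ≤ ‖W‖ * ‖g t‖ ^ 2 := by
        calc |(⟪g t, W (g t)⟫ : ℂ).re| ≤ ‖(⟪g t, W (g t)⟫ : ℂ)‖ := by
              exact Complex.abs_re_le_norm _
        _ ≤ ‖g t‖ * ‖W (g t)‖ := norm_inner_le_norm _ _
        _ ≤ ‖g t‖ * (‖W‖ * ‖g t‖) := by
            exact mul_le_mul_of_nonneg_left (W.le_opNorm _) (norm_nonneg _)
        _ = ‖W‖ * ‖g t‖ ^ 2 := by ring
      have h2 : ‖W‖ * ‖g t‖ ^ 2 ≤ ε := by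
        have h3 : ‖W‖ * ‖g t‖ ^ 2 ≤ K * (ε / K) := by
          apply mul_le_mul (by linarith) ht (by positivity) (le_of_lt hK0)
        rwa [mul_div_cancel₀ _ (ne_of_gt hK0)] at h3
      have := abs_le.mp h1
      linarith
    have hf0 : f t ≤ f 0 := hfmono ht0
    have hg0 : g 0 = x := sgrp_zero T x
    have hfx : f 0 = (⟪x, Vq x⟫ : ℂ).re - (⟪x, Vp x⟫ : ℂ).re := by
      rw [hfdef]
      simp only [hg0, hW, ContinuousLinearMap.sub_apply, inner_sub_right, Complex.sub_re]
    linarith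
  by_contra hcon
  push_neg at hcon
  have := key ((( ⟪x, Vp x⟫ : ℂ).re - (⟪x, Vq x⟫ : ℂ).re) / 2) (by linarith)
  linarith

lemma approx_eig [Nontrivial H] {T : H →L[ℂ] H} {z w : ℂ}
    (hz : z ∈ spectrum ℂ T) (hw : w ∉ spectrum ℂ T) :
    ∃ u : H, ‖u‖ = 1 ∧ ‖T u - z • u‖ ≤ 3 * ‖w - z‖ := by
  set d := ‖w - z‖ with hd
  have hwz : w ≠ z := by rintro rfl; exact hw hz
  have hd0 : 0 < d := by simpa [hd] using sub_ne_zero_of_ne hwz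
  have hu : IsUnit ((algebraMap ℂ (H →L[ℂ] H)) w - T) := spectrum.notMem_iff.mp hw
  set X : (H →L[ℂ] H)ˣ := hu.unit with hX
  have hXval : (X : H →L[ℂ] H) = (algebraMap ℂ (H →L[ℂ] H)) w - T := rfl
  have hinv_pos : 0 < ‖((X⁻¹ : (H →L[ℂ] H)ˣ) : H →L[ℂ] H)‖ := Units.norm_pos X⁻¹
  have hlow : ‖((X⁻¹ : (H →L[ℂ] H)ˣ) : H →L[ℂ] H)‖⁻¹ ≤ d := by
    by_contra hcon
    push_neg at hcon
    have ht : ‖(algebraMap ℂ (H →L[ℂ] H)) (z - w)‖ < ‖((X⁻¹ : (H →L[ℂ] H)ˣ) : H →L[ℂ] H)‖⁻¹ := by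
      rw [norm_algebraMap']
      simpa [← norm_neg (z - w), neg_sub] using hcon
    have hunit : IsUnit ((algebraMap ℂ (H →L[ℂ] H)) z - T) := by
      have h5 : IsUnit ((X : H →L[ℂ] H) + (algebraMap ℂ (H →L[ℂ] H)) (z - w)) :=
        (X.add _ ht).isUnit
      rwa [hXval, sub_add_eq_add_sub, ← map_add, add_sub_cancel] at h5
    exact spectrum.mem_iff.mp hz hunit
  have hlow2 : d⁻¹ ≤ ‖((X⁻¹ : (H →L[ℂ] H)ˣ) : H →L[ℂ] H)‖ := by
    have := inv_anti₀ (by positivity) hlow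
    rwa [inv_inv] at this
  have hr : d⁻¹ / 2 < ‖((X⁻¹ : (H →L[ℂ] H)ˣ) : H →L[ℂ] H)‖ := by
    have : 0 < d⁻¹ := by positivity
    linarith
  obtain ⟨y, hy1, hy2⟩ := ContinuousLinearMap.exists_lt_apply_of_lt_opNorm _ hr
  set v : H := ((X⁻¹ : (H →L[ℂ] H)ˣ) : H →L[ℂ] H) y with hv
  have hv0 : 0 < ‖v‖ := lt_trans (by positivity) hy2
  refine ⟨‖v‖⁻¹ • v, ?_, ?_⟩
  · rw [norm_smul, norm_inv, norm_norm, inv_mul_cancel₀ (ne_of_gt hv0)]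
  · have hXv : ((X : H →L[ℂ] H)) v = y := by
      rw [hv, ← ContinuousLinearMap.mul_apply, Units.mul_inv, ContinuousLinearMap.one_apply]
    have hTv : T v = w • v - y := by
      have := congrArg (fun (L : H →L[ℂ] H) => L v) hXval
      simp only [ContinuousLinearMap.sub_apply] at this
      rw [hXv] at this
      have halg : ((algebraMap ℂ (H →L[ℂ] H)) w) v = w • v := by
        rw [Algebra.algebraMap_eq_smul_one]
        simp
      rw [halg] at this
      rw [this]
      module
    have hexp : T (‖v‖⁻¹ • v) - z • (‖v‖⁻¹ • v)
        = (w - z) • (‖v‖⁻¹ • v) - ‖v‖⁻¹ • y := by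
      rw [T.map_smul_of_tower, hTv]
      module
    rw [hexp]
    have hb1 : ‖(w - z) • (‖v‖⁻¹ • v)‖ = d := by
      rw [norm_smul, norm_smul, norm_inv, norm_norm, inv_mul_cancel₀ (ne_of_gt hv0), mul_one, hd]
    have hb2 : ‖‖v‖⁻¹ • y‖ ≤ 2 * d := by
      rw [norm_smul, norm_inv, norm_norm]
      have h1 : ‖v‖⁻¹ ≤ (d⁻¹ / 2)⁻¹ := by
        apply inv_anti₀ (by positivity) (le_of_lt hy2)
      have h2 : (d⁻¹ / 2)⁻¹ = 2 * d := by
        field_simp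
      have hy1' : ‖y‖ ≤ 1 := le_of_lt hy1
      calc ‖v‖⁻¹ * ‖y‖ ≤ (2 * d) * 1 := by
            apply mul_le_mul (h2 ▸ h1) hy1' (norm_nonneg _) (by positivity)
      _ = 2 * d := mul_one _
    calc ‖(w - z) • (‖v‖⁻¹ • v) - ‖v‖⁻¹ • y‖
        ≤ ‖(w - z) • (‖v‖⁻¹ • v)‖ + ‖‖v‖⁻¹ • y‖ := norm_sub_le _ _
    _ ≤ d + 2 * d := by rw [hb1]; linarith
    _ = 3 * d := by ring

lemma approx_eig_adjoint [Nontrivial H] {A : H →L[ℂ] H} {lamstar : ℂ} {S : Set ℂ}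
    (hspec : spectrum ℂ A = {lamstar} ∪ S)
    (hstar : lamstar.re = 0) (hS : S ⊆ {z : ℂ | z.re < 0}) {ε : ℝ} (hε : 0 < ε) :
    ∃ u : H, ‖u‖ = 1 ∧
      ‖ContinuousLinearMap.adjoint A u - ((starRingEnd ℂ) lamstar) • u‖ ≤ ε := by
  have hadj : ContinuousLinearMap.adjoint A = star A := rfl
  have hspecadj : spectrum ℂ (ContinuousLinearMap.adjoint A) = star (spectrum ℂ A) := by
    rw [hadj, spectrum.map_star]
  have hz : (starRingEnd ℂ) lamstar ∈ spectrum ℂ (ContinuousLinearMap.adjoint A) := by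
    rw [hspecadj, Set.mem_star]
    simp only [hspec]
    left
    simp [Complex.star_def]
  have hw : (starRingEnd ℂ) lamstar + ((ε / 3 : ℝ) : ℂ)
      ∉ spectrum ℂ (ContinuousLinearMap.adjoint A) := by
    rw [hspecadj, Set.mem_star]
    intro hmem
    have hstarw : star ((starRingEnd ℂ) lamstar + ((ε / 3 : ℝ) : ℂ))
        = lamstar + ((ε / 3 : ℝ) : ℂ) := by
      simp [Complex.star_def, map_add, Complex.conj_conj, Complex.conj_ofReal]
    rw [hstarw, hspec] at hmem
    rcases hmem with hmem | hmem
    · rw [Set.mem_singleton_iff] at hmem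
      have := congrArg Complex.re hmem
      simp [hstar] at this
      linarith
    · have := hS hmem
      simp only [Set.mem_setOf_eq, Complex.add_re, hstar, Complex.ofReal_re] at this
      linarith
  obtain ⟨u, hu1, hu2⟩ := approx_eig hz hw
  refine ⟨u, hu1, ?_⟩
  have hnorm : ‖(starRingEnd ℂ) lamstar + ((ε / 3 : ℝ) : ℂ) - (starRingEnd ℂ) lamstar‖
      = ε / 3 := by
    simp only [add_sub_cancel_left]
    rw [Complex.norm_real, Real.norm_eq_abs, abs_of_pos (by linarith)]
  rw [hnorm] at hu2
  linarith

lemma sa_inner_real {W : H →L[ℂ] H} (hW : IsSelfAdjoint W) (z : H) :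
    (⟪z, W z⟫ : ℂ) = (((⟪z, W z⟫ : ℂ).re : ℝ) : ℂ) := by
  have h : (starRingEnd ℂ) (⟪z, W z⟫ : ℂ) = ⟪z, W z⟫ := by
    rw [inner_conj_symm, sa_comm hW]
  exact (Complex.conj_eq_iff_re.mp h).symm

lemma ubp_bound {V : ℝ → H →L[ℂ] H}
    (hVsa : ∀ p < (0 : ℝ), IsSelfAdjoint (V p))
    (hVpos : ∀ p < (0 : ℝ), ∀ g : H, 0 ≤ (⟪g, V p g⟫ : ℂ).re)
    (hbdd : ∀ u : H, ∃ C, ∀ p < (0 : ℝ), (⟪u, V p u⟫ : ℂ).re ≤ C) :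
    ∃ M, ∀ p < (0 : ℝ), ‖V p‖ ≤ M := by
  have key : ∀ z : H, ∃ C, ∀ p, ∀ _ : p < (0 : ℝ), ‖(⟪(V p) z, z⟫ : ℂ)‖ ≤ C := by
    intro z
    obtain ⟨C, hC⟩ := hbdd z
    refine ⟨C, fun p hp => ?_⟩
    rw [← inner_conj_symm, RCLike.norm_conj, sa_inner_real (hVsa p hp), Complex.norm_real,
      Real.norm_eq_abs, abs_of_nonneg (hVpos p hp z)]
    exact hC p hp
  have step1 : ∀ u : H, ∃ Cu, ∀ p, ∀ _ : p < (0 : ℝ), ‖V p u‖ ≤ Cu := by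
    intro u
    have hpt : ∀ w : H, ∃ C, ∀ i : {p : ℝ // p < 0},
        ‖(innerSL ℂ ((V i.1) u)) w‖ ≤ C := by
      intro w
      obtain ⟨C1, hC1⟩ := key (w + u)
      obtain ⟨C2, hC2⟩ := key (w - u)
      obtain ⟨C3, hC3⟩ := key (w + Complex.I • u)
      obtain ⟨C4, hC4⟩ := key (w - Complex.I • u)
      refine ⟨(C1 + C2 + C3 + C4) / 4, fun i => ?_⟩
      have hpol := inner_map_polarization ((V i.1) : H →ₗ[ℂ] H) w u
      simp only [ContinuousLinearMap.coe_coe] at hpol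
      have happ : (innerSL ℂ ((V i.1) u)) w = (⟪(V i.1) u, w⟫ : ℂ) := rfl
      rw [happ, hpol]
      have e1 := hC1 i.1 i.2
      have e2 := hC2 i.1 i.2
      have e3 := hC3 i.1 i.2
      have e4 := hC4 i.1 i.2
      have hI : ‖(Complex.I : ℂ)‖ = 1 := by simp
      calc ‖((⟪(V i.1) (w + u), w + u⟫ : ℂ) - ⟪(V i.1) (w - u), w - u⟫ +
            Complex.I * ⟪(V i.1) (w + Complex.I • u), w + Complex.I • u⟫ -
            Complex.I * ⟪(V i.1) (w - Complex.I • u), w - Complex.I • u⟫) / 4‖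
          = ‖(⟪(V i.1) (w + u), w + u⟫ : ℂ) - ⟪(V i.1) (w - u), w - u⟫ +
            Complex.I * ⟪(V i.1) (w + Complex.I • u), w + Complex.I • u⟫ -
            Complex.I * ⟪(V i.1) (w - Complex.I • u), w - Complex.I • u⟫‖ / 4 := by
            rw [norm_div]; norm_num
      _ ≤ (C1 + C2 + C3 + C4) / 4 := by
            apply div_le_div_of_nonneg_right ?_ (by norm_num)
            have b1 : ‖(⟪(V i.1) (w + u), w + u⟫ : ℂ) - ⟪(V i.1) (w - u), w - u⟫ +
                Complex.I * ⟪(V i.1) (w + Complex.I • u), w + Complex.I • u⟫ -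
                Complex.I * ⟪(V i.1) (w - Complex.I • u), w - Complex.I • u⟫‖
              ≤ ‖(⟪(V i.1) (w + u), w + u⟫ : ℂ)‖ + ‖(⟪(V i.1) (w - u), w - u⟫ : ℂ)‖ +
                ‖Complex.I * ⟪(V i.1) (w + Complex.I • u), w + Complex.I • u⟫‖ +
                ‖Complex.I * ⟪(V i.1) (w - Complex.I • u), w - Complex.I • u⟫‖ := by
              calc ‖(⟪(V i.1) (w + u), w + u⟫ : ℂ) - ⟪(V i.1) (w - u), w - u⟫ +
                  Complex.I * ⟪(V i.1) (w + Complex.I • u), w + Complex.I • u⟫ -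
                  Complex.I * ⟪(V i.1) (w - Complex.I • u), w - Complex.I • u⟫‖
                  ≤ ‖(⟪(V i.1) (w + u), w + u⟫ : ℂ) - ⟪(V i.1) (w - u), w - u⟫ +
                    Complex.I * ⟪(V i.1) (w + Complex.I • u), w + Complex.I • u⟫‖ +
                    ‖Complex.I * ⟪(V i.1) (w - Complex.I • u), w - Complex.I • u⟫‖ :=
                  norm_sub_le _ _
              _ ≤ ‖(⟪(V i.1) (w + u), w + u⟫ : ℂ) - ⟪(V i.1) (w - u), w - u⟫‖ +
                    ‖Complex.I * ⟪(V i.1) (w + Complex.I • u), w + Complex.I • u⟫‖ +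
                    ‖Complex.I * ⟪(V i.1) (w - Complex.I • u), w - Complex.I • u⟫‖ := by
                  gcongr
                  exact norm_add_le _ _
              _ ≤ _ := by
                  gcongr
                  exact norm_sub_le _ _
            rw [norm_mul, norm_mul, Complex.norm_I, one_mul, one_mul] at b1
            linarith
    obtain ⟨Cu, hCu⟩ := banach_steinhaus hpt
    refine ⟨Cu, fun p hp => ?_⟩
    have := hCu ⟨p, hp⟩
    rwa [innerSL_apply_norm] at this
  have hpt2 : ∀ u : H, ∃ C, ∀ i : {p : ℝ // p < 0}, ‖(V i.1) u‖ ≤ C := by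
    intro u
    obtain ⟨Cu, hCu⟩ := step1 u
    exact ⟨Cu, fun i => hCu i.1 i.2⟩
  obtain ⟨M, hM⟩ := banach_steinhaus hpt2
  exact ⟨M, fun p hp => hM ⟨p, hp⟩⟩

lemma key_identity {A B Vp : H →L[ℂ] H} {σ p : ℝ} {lamstar : ℂ} (hstar : lamstar.re = 0)
    (hsa : IsSelfAdjoint Vp)
    (hlyap : LyapunovEq ((p : ℂ) • ContinuousLinearMap.id ℂ H + A) B σ Vp) (u : H) :
    2 * (p * (⟪u, Vp u⟫ : ℂ).re
        + (⟪u, Vp (ContinuousLinearMap.adjoint A u - (starRingEnd ℂ) lamstar • u)⟫ : ℂ).re)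
      = -(σ ^ 2) * (⟪u, B u⟫ : ℂ).re := by
  have h1 := lyap_re hsa hlyap u
  rw [adjoint_shift] at h1
  have hdecomp : ((p : ℂ) • ContinuousLinearMap.id ℂ H + ContinuousLinearMap.adjoint A) u
      = ((p : ℂ) + (starRingEnd ℂ) lamstar) • u
        + (ContinuousLinearMap.adjoint A u - (starRingEnd ℂ) lamstar • u) := by
    simp only [ContinuousLinearMap.add_apply, ContinuousLinearMap.smul_apply,
      ContinuousLinearMap.id_apply]
    module
  rw [hdecomp, map_add, map_smul, inner_add_right, inner_smul_right] at h1
  rw [sa_inner_real hsa u] at h1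
  have hre : (((p : ℂ) + (starRingEnd ℂ) lamstar) * (((⟪u, Vp u⟫ : ℂ).re : ℝ) : ℂ)).re
      = p * (⟪u, Vp u⟫ : ℂ).re := by
    rw [Complex.mul_re]
    simp [hstar]
  rw [Complex.add_re, hre] at h1
  exact h1


end Aux

theorem statement14 {H : Type*} [NormedAddCommGroup H] [InnerProductSpace ℂ H]
    [CompleteSpace H] [Nontrivial H] (A B : H →L[ℂ] H)
    (lamstar : ℂ) (S : Set ℂ)
    (hspec : spectrum ℂ A = {lamstar} ∪ S)
    (hstar : lamstar.re = 0) (hS : S ⊆ {z : ℂ | z.re < 0})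
    (hBsa : IsSelfAdjoint B) (c : ℝ) (hc : 0 < c)
    (hB : ∀ g : H, c * ‖g‖ ^ 2 ≤ (⟪g, B g⟫ : ℂ).re)
    (σ : ℝ) (hσ : 0 < σ)
    (V : ℝ → H →L[ℂ] H)
    (hVsa : ∀ p < (0 : ℝ), IsSelfAdjoint (V p))
    (hVpos : ∀ p < (0 : ℝ), ∀ g : H, 0 ≤ (⟪g, V p g⟫ : ℂ).re)
    (hV : ∀ p < (0 : ℝ),
      LyapunovEq ((p : ℂ) • ContinuousLinearMap.id ℂ H + A) B σ (V p)) :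
    ∃ u : ℕ → H, (∀ k, ‖u k‖ = 1) ∧
      ∀ k, Tendsto (fun p => (⟪u k, V p (u k)⟫ : ℂ).re) (𝓝[<] (0 : ℝ)) atTop := by
  -- Step 1: no uniform bound is possible
  have hnb : ¬ (∀ u : H, ∃ C, ∀ p < (0 : ℝ), (⟪u, V p u⟫ : ℂ).re ≤ C) := by
    intro hbdd
    obtain ⟨M, hM⟩ := ubp_bound hVsa hVpos hbdd
    have hM0 : 0 ≤ M := le_trans (norm_nonneg (V (-1))) (hM (-1) (by norm_num))
    set K := M + 1 with hK
    have hK0 : 0 < K := by linarith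
    have hε : 0 < σ ^ 2 * c / (4 * K) := by positivity
    obtain ⟨u, hu1, hur⟩ := approx_eig_adjoint (H := H) hspec hstar hS hε
    set r := ContinuousLinearMap.adjoint A u - (starRingEnd ℂ) lamstar • u with hr
    set p := -(σ ^ 2 * c / (8 * K)) with hp
    have hp0 : p < 0 := by
      rw [hp]
      have : 0 < σ ^ 2 * c / (8 * K) := by positivity
      linarith
    have hid := key_identity hstar (hVsa p hp0) (hV p hp0) u
    -- bounds
    have hb : c ≤ (⟪u, B u⟫ : ℂ).re := by
      have := hB u
      rw [hu1] at this
      simpa using this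
    have habs : ∀ z : H, |(⟪u, V p z⟫ : ℂ).re| ≤ ‖V p‖ * ‖z‖ := by
      intro z
      calc |(⟪u, V p z⟫ : ℂ).re| ≤ ‖(⟪u, V p z⟫ : ℂ)‖ := by
            exact Complex.abs_re_le_norm _
      _ ≤ ‖u‖ * ‖(V p) z‖ := norm_inner_le_norm _ _
      _ = ‖(V p) z‖ := by rw [hu1, one_mul]
      _ ≤ ‖V p‖ * ‖z‖ := (V p).le_opNorm z
    have hVr : |(⟪u, V p r⟫ : ℂ).re| ≤ σ ^ 2 * c / 4 := by
      calc |(⟪u, V p r⟫ : ℂ).re| ≤ ‖V p‖ * ‖r‖ := habs r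
      _ ≤ K * (σ ^ 2 * c / (4 * K)) := by
          apply mul_le_mul (by linarith [hM p hp0]) hur (norm_nonneg _) (le_of_lt hK0)
      _ = σ ^ 2 * c / 4 := by field_simp
    have hv_le : (⟪u, V p u⟫ : ℂ).re ≤ K := by
      have h1 := habs u
      rw [hu1, mul_one] at h1
      have := abs_le.mp h1
      linarith [hM p hp0]
    have hv_nonneg : 0 ≤ (⟪u, V p u⟫ : ℂ).re := hVpos p hp0 u
    -- derive contradiction
    have hre : -(2 * p) * (⟪u, V p u⟫ : ℂ).re
        = σ ^ 2 * (⟪u, B u⟫ : ℂ).re + 2 * (⟪u, V p r⟫ : ℂ).re := by linarith [hid]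
    have hσ2 : 0 < σ ^ 2 := by positivity
    have hσ2c : 0 < σ ^ 2 * c := by positivity
    have hRHS : σ ^ 2 * c / 2 ≤ -(2 * p) * (⟪u, V p u⟫ : ℂ).re := by
      rw [hre]
      have h1 : σ ^ 2 * c ≤ σ ^ 2 * (⟪u, B u⟫ : ℂ).re :=
        mul_le_mul_of_nonneg_left hb (le_of_lt hσ2)
      have h2 := abs_le.mp hVr
      linarith
    have hLHS : -(2 * p) * (⟪u, V p u⟫ : ℂ).re ≤ σ ^ 2 * c / 4 := by
      have hp2 : -(2 * p) = σ ^ 2 * c / (4 * K) := by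
        rw [hp]; field_simp; ring
      rw [hp2]
      calc σ ^ 2 * c / (4 * K) * (⟪u, V p u⟫ : ℂ).re ≤ σ ^ 2 * c / (4 * K) * K := by
            apply mul_le_mul_of_nonneg_left hv_le (by positivity)
      _ = σ ^ 2 * c / 4 := by field_simp
    linarith
  -- Step 2: extract the bad vector
  push_neg at hnb
  obtain ⟨u₀, hu₀⟩ := hnb
  have hu₀ne : u₀ ≠ 0 := by
    intro h0
    obtain ⟨p, hp, hgt⟩ := hu₀ 0
    rw [h0] at hgt
    simp at hgt
  set a : ℝ := ‖u₀‖⁻¹ with ha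
  have ha0 : 0 < a := by
    rw [ha]
    exact inv_pos.mpr (norm_pos_iff.mpr hu₀ne)
  set w : H := a • u₀ with hwdef
  have hw1 : ‖w‖ = 1 := by
    rw [hwdef, norm_smul, ha, norm_inv, norm_norm,
      inv_mul_cancel₀ (norm_ne_zero_iff.mpr hu₀ne)]
  have hscale : ∀ W : H →L[ℂ] H, (⟪w, W w⟫ : ℂ).re = a ^ 2 * (⟪u₀, W u₀⟫ : ℂ).re := by
    intro W
    rw [hwdef]
    have hsmul : a • u₀ = ((a : ℝ) : ℂ) • u₀ := by
      simp [Complex.real_smul]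
    rw [hsmul, map_smul, inner_smul_left, inner_smul_right]
    rw [Complex.conj_ofReal]
    rw [← mul_assoc, ← Complex.ofReal_mul]
    rw [Complex.re_ofReal_mul]
    ring
  refine ⟨fun _ => w, fun _ => hw1, fun _ => ?_⟩
  rw [tendsto_atTop]
  intro C
  obtain ⟨p₀, hp₀, hgt⟩ := hu₀ (C / a ^ 2)
  have hmem : Set.Ioo p₀ (0 : ℝ) ∈ 𝓝[<] (0 : ℝ) :=
    Ioo_mem_nhdsLT_of_mem (by constructor <;> [exact hp₀; exact le_refl 0])
  filter_upwards [hmem] with p hpmem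
  have hmono := lyap_mono hσ hc hB (le_of_lt hpmem.1) (hVsa p₀ hp₀) (hVsa p hpmem.2)
    (hVpos p₀ hp₀) (hVpos p hpmem.2) (hV p₀ hp₀) (hV p hpmem.2) u₀
  rw [hscale (V p)]
  have h3 : C / a ^ 2 ≤ (⟪u₀, V p u₀⟫ : ℂ).re := by linarith
  have ha2 : 0 < a ^ 2 := by positivity
  calc C = a ^ 2 * (C / a ^ 2) := by field_simp
  _ ≤ a ^ 2 * (⟪u₀, V p u₀⟫ : ℂ).re := mul_le_mul_of_nonneg_left h3 (le_of_lt ha2)
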